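/- arXiv:1705.10935 — 2 statements merged into one kernel-verified Lean document; each statement's English description precedes it below -/
import Mathlib

section
/- For every C¹ function f : U → ℍ on an open set U ⊆ ℍ and every x ∈ U, the quaternion-valued 4-form identity Dq ∧ df(x) = −(D_ℓ f)(x)·v holds, where v = dx¹∧dx²∧dx³∧dx⁴ is the volume form. -/
open scoped Quaternion

noncomputable section

/-- The standard basis `e₁ = 1, e₂ = i, e₃ = j, e₄ = k` of the quaternions. -/
def e : Fin 4 → ℍ[ℝ] := ![1, ⟨0,1,0,0⟩, ⟨0,0,1,0⟩, ⟨0,0,0,1⟩]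

/-- The real coordinates of a quaternion. -/
def toTuple (x : ℍ[ℝ]) : Fin 4 → ℝ := ![x.re, x.imI, x.imJ, x.imK]

/-- The coordinate functional `dxⁱ : ℍ → ℝ`. -/
def coord (i : Fin 4) : ℍ[ℝ] →ₗ[ℝ] ℝ :=
  (LinearMap.proj i).comp (QuaternionAlgebra.linearEquivTuple (-1 : ℝ) (0 : ℝ) (-1 : ℝ)).toLinearMap

/-- A quaternion-valued `m`-form (at a point). -/
abbrev QForm (m : ℕ) := AlternatingMap ℝ ℍ[ℝ] ℍ[ℝ] (Fin m)

/-- The wedge product of quaternion-valued forms, via `AlternatingMap.domCoprod`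
composed with quaternion multiplication and reindexed along `Fin m ⊕ Fin n ≃ Fin (m+n)`. -/
def wedge {m n : ℕ} (α : QForm m) (β : QForm n) : QForm (m + n) :=
  ((LinearMap.mul' ℝ ℍ[ℝ]).compAlternatingMap (α.domCoprod β)).domDomCongr finSumFinEquiv

/-- Left multiplication of a quaternion-valued form by a quaternion. -/
def qsmul (q : ℍ[ℝ]) {m : ℕ} (γ : QForm m) : QForm m :=
  (LinearMap.mulLeft ℝ q).compAlternatingMap γ

/-- Right multiplication of a quaternion-valued form by a quaternion. -/
def qsmulR (q : ℍ[ℝ]) {m : ℕ} (γ : QForm m) : QForm m :=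
  (LinearMap.mulRight ℝ q).compAlternatingMap γ

/-- The quaternion-valued 1-form `dxⁱ` (real-valued, regarded as ℍ-valued). -/
def dx (i : Fin 4) : QForm 1 :=
  AlternatingMap.ofSubsingleton ℝ ℍ[ℝ] ℍ[ℝ] 0 ((Algebra.linearMap ℝ ℍ[ℝ]).comp (coord i))

/-- `dxⁱ ∧ dxʲ ∧ dxᵏ`. -/
def w3 (i j k : Fin 4) : QForm 3 := wedge (wedge (dx i) (dx j)) (dx k)

/-- The volume form `v = dx¹∧dx²∧dx³∧dx⁴`. -/
def vol : QForm 4 := wedge (wedge (wedge (dx 0) (dx 1)) (dx 2)) (dx 3)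

/-- The differential `df(x)` of `f : ℍ → ℍ` at `x`, as a quaternion-valued 1-form. -/
def dform (f : ℍ[ℝ] → ℍ[ℝ]) (x : ℍ[ℝ]) : QForm 1 :=
  AlternatingMap.ofSubsingleton ℝ ℍ[ℝ] ℍ[ℝ] 0 (fderiv ℝ f x).toLinearMap

/-- The 3-form `Dq`. -/
def Dq : QForm 3 :=
  qsmul (e 0) (w3 1 2 3) - qsmul (e 1) (w3 0 2 3) + qsmul (e 2) (w3 0 1 3) - qsmul (e 3) (w3 0 1 2)

namespace FueterAux

open Equiv

lemma mem_range_of_fix {m : ℕ} (π : Perm (Fin m ⊕ Fin 1)) (h : π (Sum.inr 0) = Sum.inr 0) :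
    π ∈ (Perm.sumCongrHom (Fin m) (Fin 1)).range := by
  apply Equiv.Perm.mem_sumCongrHom_range_of_perm_mapsTo_inl
  rintro x ⟨a, rfl⟩
  rcases hx : π (Sum.inl a) with b | b
  · exact ⟨b, rfl⟩
  · exfalso
    have hb : b = 0 := Subsingleton.elim _ _
    have : π (Sum.inl a) = π (Sum.inr 0) := by rw [hx, hb, h]
    exact absurd (π.injective this) (by simp)

def modEquiv {m : ℕ} : (Fin m ⊕ Fin 1) ≃ Perm.ModSumCongr (Fin m) (Fin 1) where
  toFun j := Quotient.mk'' (Equiv.swap j (Sum.inr 0))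
  invFun := Quotient.lift (fun σ => σ (Sum.inr 0)) (by
    intro a b hab
    have hab' := QuotientGroup.leftRel_apply.mp hab
    obtain ⟨⟨p, q⟩, hpq⟩ := hab'
    have : b = a * Equiv.Perm.sumCongrHom (Fin m) (Fin 1) (p, q) := by
      rw [hpq]; group
    rw [this]
    simp [Equiv.Perm.mul_apply, Equiv.Perm.sumCongrHom, Subsingleton.elim (q 0) 0])
  left_inv j := by simp
  right_inv := by
    intro q
    induction q using Quotient.inductionOn' with
    | h σ =>
      apply Quotient.sound'
      rw [QuotientGroup.leftRel_apply]
      apply mem_range_of_fix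
      simp [Equiv.Perm.mul_apply]

theorem wedge_apply_one {m : ℕ} (α : QForm m) (β : QForm 1) (v : Fin (m + 1) → ℍ[ℝ]) :
    wedge α β v = ∑ j : Fin m ⊕ Fin 1,
      Equiv.Perm.sign (Equiv.swap j (Sum.inr 0)) •
        ((α fun i => v (finSumFinEquiv (Equiv.swap j (Sum.inr 0) (Sum.inl i)))) *
         (β fun i => v (finSumFinEquiv (Equiv.swap j (Sum.inr 0) (Sum.inr i))))) := by
  have h1 : wedge α β v =
      LinearMap.mul' ℝ ℍ[ℝ] ((α.domCoprod β) (v ∘ finSumFinEquiv)) := rfl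
  rw [h1]
  have h2 : (α.domCoprod β) (v ∘ finSumFinEquiv) =
      ∑ σ : Equiv.Perm.ModSumCongr (Fin m) (Fin 1),
        AlternatingMap.domCoprod.summand α β σ (v ∘ finSumFinEquiv) := by
    rw [← MultilinearMap.sum_apply]
    exact congrFun (congrArg DFunLike.coe (AlternatingMap.domCoprod_coe α β)) _
  rw [h2, ← Equiv.sum_comp (modEquiv (m := m)), map_sum]
  refine Finset.sum_congr rfl fun j _ => ?_
  rw [show modEquiv j = Quotient.mk'' (Equiv.swap j (Sum.inr 0)) from rfl,
    AlternatingMap.domCoprod.summand_mk'']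
  simp only [MultilinearMap.smul_apply, MultilinearMap.domDomCongr_apply,
    MultilinearMap.domCoprod_apply, map_smul, LinearMap.mul'_apply, Function.comp_apply,
    TensorProduct.smul_tmul', smul_mul_assoc]
  simp only [Units.smul_def, map_zsmul]
  rfl

theorem wedge11_apply (α β : QForm 1) (v : Fin 2 → ℍ[ℝ]) :
    wedge α β v = α (fun _ => v 0) * β (fun _ => v 1) - α (fun _ => v 1) * β (fun _ => v 0) := by
  rw [wedge_apply_one, Fintype.sum_sum_type]
  simp [Perm.sign_swap, Equiv.swap_apply_def, Fin.sum_univ_succ, sub_eq_add_neg, Fin.eq_zero]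
  have hL : ∀ i : Fin 1, finSumFinEquiv (Sum.inl i) = (0 : Fin (1+1)) := by decide
  have hR : ∀ i : Fin 1, finSumFinEquiv (Sum.inr i) = (1 : Fin (1+1)) := by decide
  simp only [hL, hR]
  abel

theorem wedge21_apply (α : QForm 2) (β : QForm 1) (v : Fin 3 → ℍ[ℝ]) :
    wedge α β v = α ![v 0, v 1] * β (fun _ => v 2) - α ![v 0, v 2] * β (fun _ => v 1)
      - α ![v 2, v 1] * β (fun _ => v 0) := by
  rw [wedge_apply_one, Fintype.sum_sum_type]
  have h0 : (fun i : Fin 2 => v (finSumFinEquiv (Equiv.swap (Sum.inl (0:Fin 2)) (Sum.inr (0:Fin 1)) (Sum.inl i))))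
      = ![v 2, v 1] := by
    funext i; fin_cases i <;> rfl
  have h1 : (fun i : Fin 2 => v (finSumFinEquiv (Equiv.swap (Sum.inl (1:Fin 2)) (Sum.inr (0:Fin 1)) (Sum.inl i))))
      = ![v 0, v 2] := by
    funext i; fin_cases i <;> rfl
  have h2 : (fun i : Fin 2 => v (finSumFinEquiv (Equiv.swap (Sum.inr (0:Fin 1)) (Sum.inr (0:Fin 1)) (Sum.inl i))))
      = ![v 0, v 1] := by
    funext i; fin_cases i <;> rfl
  have b0 : (fun i : Fin 1 => v (finSumFinEquiv (Equiv.swap (Sum.inl (0 : Fin 2)) (Sum.inr 0) (Sum.inr i))))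
      = fun _ => v 0 := by
    funext i; fin_cases i; rfl
  have b1 : (fun i : Fin 1 => v (finSumFinEquiv (Equiv.swap (Sum.inl (1 : Fin 2)) (Sum.inr 0) (Sum.inr i))))
      = fun _ => v 1 := by
    funext i; fin_cases i; rfl
  have b2 : (fun i : Fin 1 => v (finSumFinEquiv (Equiv.swap (Sum.inr (0 : Fin 1)) (Sum.inr 0) (Sum.inr i))))
      = fun _ => v 2 := by
    funext i; fin_cases i; rfl
  simp only [Fin.sum_univ_two, Fin.sum_univ_one, h0, h1, h2, b0, b1, b2]
  have s0 : Perm.sign (Equiv.swap (Sum.inl (0 : Fin 2)) (Sum.inr (0 : Fin 1))) = -1 := by decide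
  have s1 : Perm.sign (Equiv.swap (Sum.inl (1 : Fin 2)) (Sum.inr (0 : Fin 1))) = -1 := by decide
  have s2 : Perm.sign (Equiv.swap (Sum.inr (0 : Fin 1) : Fin 2 ⊕ Fin 1) (Sum.inr (0 : Fin 1))) = 1 := by decide
  rw [s0, s1, s2]
  simp only [one_smul, Units.smul_def, Units.val_neg, Units.val_one, neg_smul, one_smul]
  abel

theorem wedge31_apply (α : QForm 3) (β : QForm 1) (v : Fin 4 → ℍ[ℝ]) :
    wedge α β v = α ![v 0, v 1, v 2] * β (fun _ => v 3) - α ![v 0, v 1, v 3] * β (fun _ => v 2)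
      - α ![v 0, v 3, v 2] * β (fun _ => v 1) - α ![v 3, v 1, v 2] * β (fun _ => v 0) := by
  rw [wedge_apply_one, Fintype.sum_sum_type]
  have h0 : (fun i : Fin 3 => v (finSumFinEquiv (Equiv.swap (Sum.inl (0:Fin 3)) (Sum.inr (0:Fin 1)) (Sum.inl i))))
      = ![v 3, v 1, v 2] := by funext i; fin_cases i <;> rfl
  have h1 : (fun i : Fin 3 => v (finSumFinEquiv (Equiv.swap (Sum.inl (1:Fin 3)) (Sum.inr (0:Fin 1)) (Sum.inl i))))
      = ![v 0, v 3, v 2] := by funext i; fin_cases i <;> rfl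
  have h2 : (fun i : Fin 3 => v (finSumFinEquiv (Equiv.swap (Sum.inl (2:Fin 3)) (Sum.inr (0:Fin 1)) (Sum.inl i))))
      = ![v 0, v 1, v 3] := by funext i; fin_cases i <;> rfl
  have h3 : (fun i : Fin 3 => v (finSumFinEquiv (Equiv.swap (Sum.inr (0:Fin 1)) (Sum.inr (0:Fin 1)) (Sum.inl i))))
      = ![v 0, v 1, v 2] := by funext i; fin_cases i <;> rfl
  have b0 : (fun i : Fin 1 => v (finSumFinEquiv (Equiv.swap (Sum.inl (0:Fin 3)) (Sum.inr (0:Fin 1)) (Sum.inr i))))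
      = fun _ => v 0 := by funext i; fin_cases i; rfl
  have b1 : (fun i : Fin 1 => v (finSumFinEquiv (Equiv.swap (Sum.inl (1:Fin 3)) (Sum.inr (0:Fin 1)) (Sum.inr i))))
      = fun _ => v 1 := by funext i; fin_cases i; rfl
  have b2 : (fun i : Fin 1 => v (finSumFinEquiv (Equiv.swap (Sum.inl (2:Fin 3)) (Sum.inr (0:Fin 1)) (Sum.inr i))))
      = fun _ => v 2 := by funext i; fin_cases i; rfl
  have b3 : (fun i : Fin 1 => v (finSumFinEquiv (Equiv.swap (Sum.inr (0:Fin 1)) (Sum.inr (0:Fin 1)) (Sum.inr i))))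
      = fun _ => v 3 := by funext i; fin_cases i; rfl
  simp only [Fin.sum_univ_three, Fin.sum_univ_one, h0, h1, h2, h3, b0, b1, b2, b3]
  have s0 : Perm.sign (Equiv.swap (Sum.inl (0 : Fin 3)) (Sum.inr (0 : Fin 1))) = -1 := by decide
  have s1 : Perm.sign (Equiv.swap (Sum.inl (1 : Fin 3)) (Sum.inr (0 : Fin 1))) = -1 := by decide
  have s2 : Perm.sign (Equiv.swap (Sum.inl (2 : Fin 3)) (Sum.inr (0 : Fin 1))) = -1 := by decide
  have s3 : Perm.sign (Equiv.swap (Sum.inr (0 : Fin 1) : Fin 3 ⊕ Fin 1) (Sum.inr (0 : Fin 1))) = 1 := by decide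
  rw [s0, s1, s2, s3]
  simp only [one_smul, Units.smul_def, Units.val_neg, Units.val_one, neg_smul, one_smul]
  abel

lemma coord_e : ∀ i j : Fin 4, coord i (e j) = if i = j then 1 else 0 := by
  intro i j
  fin_cases i <;> fin_cases j <;>
    simp [coord, e, QuaternionAlgebra.coe_linearEquivTuple, QuaternionAlgebra.equivTuple] <;> rfl


lemma dx_apply (i : Fin 4) (v : Fin 1 → ℍ[ℝ]) :
    dx i v = algebraMap ℝ ℍ[ℝ] (coord i (v 0)) := rfl

lemma key (L : ℍ[ℝ] →ₗ[ℝ] ℍ[ℝ]) :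
    (wedge Dq (AlternatingMap.ofSubsingleton ℝ ℍ[ℝ] ℍ[ℝ] (0 : Fin 1) L) : QForm 4) e
      = qsmul (-(∑ i : Fin 4, e i * L (e i))) vol e := by
  have hsub : ∀ (L' : ℍ[ℝ] →ₗ[ℝ] ℍ[ℝ]) (v : Fin 1 → ℍ[ℝ]),
      AlternatingMap.ofSubsingleton ℝ ℍ[ℝ] ℍ[ℝ] 0 L' v = L' (v 0) := fun _ _ => rfl
  rw [wedge31_apply]
  simp only [Dq, qsmul, vol, w3, AlternatingMap.sub_apply, AlternatingMap.add_apply,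
    LinearMap.compAlternatingMap_apply, LinearMap.mulLeft_apply,
    wedge31_apply, wedge21_apply, wedge11_apply, dx_apply, hsub,
    Matrix.cons_val_zero, Matrix.cons_val_one, Matrix.head_cons,
    Matrix.cons_val_two, Matrix.tail_cons, Matrix.cons_val_three,
    coord_e, Fin.sum_univ_four]
  simp (config := { decide := true }) only [ite_true, ite_false]
  norm_num [e]
  abel

def quatBasis : Module.Basis (Fin 4) ℝ ℍ[ℝ] :=
  Module.Basis.ofEquivFun (QuaternionAlgebra.linearEquivTuple (-1 : ℝ) (0 : ℝ) (-1 : ℝ))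

lemma quatBasis_eq : ⇑quatBasis = e := by
  funext i
  unfold quatBasis
  erw [Module.Basis.coe_ofEquivFun]
  fin_cases i <;>
    · apply QuaternionAlgebra.ext <;> simp [e] <;> rfl

end FueterAux

/-- `Dq ∧ df(x) = −(D_ℓ f)(x)·v` for `C¹` functions `f` on open sets. -/
theorem Dq_wedge_df (U : Set ℍ[ℝ]) (hU : IsOpen U) (f : ℍ[ℝ] → ℍ[ℝ])
    (hf : ContDiffOn ℝ 1 f U) (x : ℍ[ℝ]) (hx : x ∈ U) :
    wedge Dq (dform f x) =
      qsmul (-(∑ i : Fin 4, e i * fderiv ℝ f x (e i))) vol := by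
  classical
  refine Module.Basis.ext_alternating FueterAux.quatBasis (fun v hv => ?_)
  have hbij : Function.Bijective v := Finite.injective_iff_bijective.mp hv
  let π : Equiv.Perm (Fin 4) := Equiv.ofBijective v hbij
  have hcomp : (fun i => FueterAux.quatBasis (v i)) = ⇑FueterAux.quatBasis ∘ ⇑π := rfl
  rw [hcomp, AlternatingMap.map_perm, AlternatingMap.map_perm, FueterAux.quatBasis_eq]
  congr 1
  exact FueterAux.key (fderiv ℝ f x).toLinearMap
end
end

section
/- For every C¹ function f : U → ℍ on an open set U ⊆ ℍ and every x ∈ U: D₁q ∧ df(x) = −df(x) ∧ D₁q = −[∂f/∂x₁(x) + ∂f/∂x₂(x) + ∂f/∂x₃(x) + ∂f/∂x₄(x)]·v, where v = dx¹∧dx²∧dx³∧dx⁴ is the volume form. -/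
open scoped Quaternion

noncomputable section

/-- The constant real-valued 3-form
`D₁q = dx²∧dx³∧dx⁴ + ∑_{2≤i<j≤4} (−1)^{i+j}·dx¹∧dxⁱ∧dxʲ`. -/
def D1q : QForm 3 :=
  w3 1 2 3 +
    (((-1 : ℝ) ^ (2 + 3)) • w3 0 1 2 +
     ((-1 : ℝ) ^ (2 + 4)) • w3 0 1 3 +
     ((-1 : ℝ) ^ (3 + 4)) • w3 0 2 3)

lemma wedge_apply {m n : ℕ} (α : QForm m) (β : QForm n) (v : Fin (m+n) → ℍ[ℝ]) :
    (m.factorial * n.factorial) • wedge α β v =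
      ∑ τ : Equiv.Perm (Fin (m+n)), Equiv.Perm.sign τ •
        (α (fun i => v (τ (Fin.castAdd n i))) * β (fun i => v (τ (Fin.natAdd m i)))) := by
  have h := MultilinearMap.domCoprod_alternization_eq (↑α) (↑β)
  simp only [Fintype.card_fin] at h
  have h2 := congrArg (fun (g : AlternatingMap ℝ ℍ[ℝ] (TensorProduct ℝ ℍ[ℝ] ℍ[ℝ]) (Fin m ⊕ Fin n)) =>
      LinearMap.mul' ℝ ℍ[ℝ] (g (fun p => v (finSumFinEquiv p)))) h
  simp only [AlternatingMap.smul_apply, map_nsmul] at h2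
  have lhs_eq : wedge α β v = LinearMap.mul' ℝ ℍ[ℝ] ((α.domCoprod β) (fun p => v (finSumFinEquiv p))) := rfl
  rw [lhs_eq, ← h2, MultilinearMap.alternatization_apply]
  rw [map_sum]
  rw [← Equiv.sum_comp (Equiv.permCongr finSumFinEquiv.symm)]
  refine Finset.sum_congr rfl fun τ _ => ?_
  simp only [MultilinearMap.domDomCongr_apply, MultilinearMap.domCoprod_apply]
  rw [LinearMap.map_smul_of_tower, LinearMap.mul'_apply, Equiv.Perm.sign_permCongr]
  simp [Equiv.permCongr_apply, finSumFinEquiv_apply_left, finSumFinEquiv_apply_right]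

lemma nsmul_cancel {n : ℕ} (hn : n ≠ 0) {x y : ℍ[ℝ]} (h : n • x = n • y) : x = y := by
  have h2 : (n:ℝ) • x = (n:ℝ) • y := by
    rw [Nat.cast_smul_eq_nsmul, Nat.cast_smul_eq_nsmul]; exact h
  exact smul_right_injective ℍ[ℝ] (by exact_mod_cast hn) h2

lemma sum_perm_succ {M : Type*} [AddCommMonoid M] {n : ℕ} (f : Equiv.Perm (Fin (n+1)) → M) :
    ∑ σ : Equiv.Perm (Fin (n+1)), f σ =
      ∑ p : Fin (n+1), ∑ σ : Equiv.Perm (Fin n), f (Equiv.Perm.decomposeFin.symm (p, σ)) := by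
  rw [Finset.univ_perm_fin_succ, Finset.sum_map, ← Finset.univ_product_univ, Finset.sum_product]
  rfl

instance : Subsingleton (Equiv.Perm (Fin 1)) :=
  ⟨fun a b => Equiv.ext fun x => Subsingleton.elim _ _⟩

lemma w2_apply (i j : Fin 4) (v : Fin 2 → ℍ[ℝ]) :
    wedge (dx i) (dx j) v =
      algebraMap ℝ ℍ[ℝ] (coord i (v 0) * coord j (v 1) - coord i (v 1) * coord j (v 0)) := by
  have h := wedge_apply (dx i) (dx j) v
  rw [show Nat.factorial 1 * Nat.factorial 1 = 1 from rfl, one_smul] at h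
  rw [h, sum_perm_succ]
  have hone : ∀ p : Fin 2, ∑ σ : Equiv.Perm (Fin 1),
      (fun σ' : Equiv.Perm (Fin 1) => (Equiv.Perm.sign (Equiv.Perm.decomposeFin.symm (p, σ')) •
        ((dx i) (fun a => v (Equiv.Perm.decomposeFin.symm (p, σ') (Fin.castAdd 1 a))) *
         (dx j) (fun a => v (Equiv.Perm.decomposeFin.symm (p, σ') (Fin.natAdd 1 a)))))) σ =
      (fun σ' : Equiv.Perm (Fin 1) => (Equiv.Perm.sign (Equiv.Perm.decomposeFin.symm (p, σ')) •
        ((dx i) (fun a => v (Equiv.Perm.decomposeFin.symm (p, σ') (Fin.castAdd 1 a))) *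
         (dx j) (fun a => v (Equiv.Perm.decomposeFin.symm (p, σ') (Fin.natAdd 1 a)))))) 1 :=
    fun p => Fintype.sum_subsingleton _ 1
  rw [Fin.sum_univ_two]
  rw [hone 0, hone 1]
  simp only [Equiv.Perm.decomposeFin_symm_of_one]
  have e00 : Equiv.swap (0 : Fin 2) 0 (Fin.castAdd 1 (0 : Fin 1)) = 0 := by decide
  have e01 : Equiv.swap (0 : Fin 2) 0 (Fin.natAdd 1 (0 : Fin 1)) = 1 := by decide
  have e10 : Equiv.swap (0 : Fin 2) 1 (Fin.castAdd 1 (0 : Fin 1)) = 1 := by decide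
  have e11 : Equiv.swap (0 : Fin 2) 1 (Fin.natAdd 1 (0 : Fin 1)) = 0 := by decide
  have sg0 : Equiv.Perm.sign (Equiv.swap (0 : Fin 2) 0) = 1 := by decide
  have sg1 : Equiv.Perm.sign (Equiv.swap (0 : Fin 2) 1) = -1 := by decide
  have dxap : ∀ (a : Fin 4) (u : Fin 1 → ℍ[ℝ]), dx a u = algebraMap ℝ ℍ[ℝ] (coord a (u 0)) := by
    intro a u; rfl
  have harg : ∀ (w : Fin 2 → ℍ[ℝ]) (q : Fin 2), (fun a : Fin 1 => w q) 0 = w q := fun _ _ => rfl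
  simp only [dxap, sg0, sg1, e00, e01, e10, e11, one_smul]
  rw [← map_mul, ← map_mul, map_sub]
  norm_num
  rw [sub_eq_add_neg]

lemma wedge13_apply (β : QForm 1) (δ : QForm 3) (v : Fin 4 → ℍ[ℝ]) :
    wedge β δ v = ∑ p : Fin 4, (if p = 0 then (1:ℤ) else -1) •
      (β (fun _ => v p) * δ (fun i => v (Equiv.swap 0 p i.succ))) := by
  apply nsmul_cancel (n := 6) (by norm_num)
  have h := wedge_apply β δ v
  rw [show Nat.factorial 1 * Nat.factorial 3 = 6 from rfl] at h
  rw [h, sum_perm_succ, Finset.smul_sum]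
  refine Finset.sum_congr rfl fun p _ => ?_
  have step : ∀ σ : Equiv.Perm (Fin 3),
      Equiv.Perm.sign (Equiv.Perm.decomposeFin.symm (p, σ)) •
        ((β fun i => v ((Equiv.Perm.decomposeFin.symm (p, σ)) (Fin.castAdd 3 i))) *
          δ fun i => v ((Equiv.Perm.decomposeFin.symm (p, σ)) (Fin.natAdd 1 i))) =
      (if p = 0 then (1:ℤ) else -1) •
        (β (fun _ => v p) * δ (fun i => v (Equiv.swap 0 p i.succ))) := by
    intro σ
    have hβ : (fun i : Fin 1 => v ((Equiv.Perm.decomposeFin.symm (p, σ)) (Fin.castAdd 3 i)))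
        = (fun _ => v p) := by
      funext i
      rw [Subsingleton.elim i 0]
      show v ((Equiv.Perm.decomposeFin.symm (p, σ)) 0) = v p
      rw [Equiv.Perm.decomposeFin_symm_apply_zero]
    have hδ : (fun i : Fin 3 => v ((Equiv.Perm.decomposeFin.symm (p, σ)) (Fin.natAdd 1 i)))
        = (fun j : Fin 3 => v (Equiv.swap 0 p j.succ)) ∘ σ := by
      funext i
      have h1 : Fin.natAdd 1 i = i.succ := by
        ext; simp [Nat.add_comm]
      rw [h1, Equiv.Perm.decomposeFin_symm_apply_succ]
      rfl
    rw [hβ, hδ, AlternatingMap.map_perm, Equiv.Perm.decomposeFin.symm_sign]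
    rw [Units.smul_def, Units.smul_def, Units.val_mul]
    rw [mul_smul_comm, smul_smul]
    have : ((if p = 0 then (1:ℤˣ) else -1) : ℤˣ) • (β (fun _ => v p) * δ (fun i => v (Equiv.swap 0 p i.succ)))
        = (if p = 0 then (1:ℤ) else -1) • (β (fun _ => v p) * δ (fun i => v (Equiv.swap 0 p i.succ))) := by
      rw [Units.smul_def]
      congr 1
      split <;> simp
    rw [← this, Units.smul_def]
    congr 1
    rcases Int.units_eq_one_or (Equiv.Perm.sign σ) with hs | hs <;> rw [hs] <;> split <;> norm_num
  simp_rw [step]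
  rw [Finset.sum_const, Finset.card_univ]
  rw [show Fintype.card (Equiv.Perm (Fin 3)) = 6 by rw [Fintype.card_perm, Fintype.card_fin]; rfl]

lemma wedge12_apply (β : QForm 1) (δ : QForm 2) (v : Fin 3 → ℍ[ℝ]) :
    wedge β δ v = ∑ p : Fin 3, (if p = 0 then (1:ℤ) else -1) •
      (β (fun _ => v p) * δ (fun i => v (Equiv.swap 0 p i.succ))) := by
  apply nsmul_cancel (n := 2) (by norm_num)
  have h := wedge_apply β δ v
  rw [show Nat.factorial 1 * Nat.factorial 2 = 2 from rfl] at h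
  rw [h, sum_perm_succ, Finset.smul_sum]
  refine Finset.sum_congr rfl fun p _ => ?_
  have step : ∀ σ : Equiv.Perm (Fin 2),
      Equiv.Perm.sign (Equiv.Perm.decomposeFin.symm (p, σ)) •
        ((β fun i => v ((Equiv.Perm.decomposeFin.symm (p, σ)) (Fin.castAdd 2 i))) *
          δ fun i => v ((Equiv.Perm.decomposeFin.symm (p, σ)) (Fin.natAdd 1 i))) =
      (if p = 0 then (1:ℤ) else -1) •
        (β (fun _ => v p) * δ (fun i => v (Equiv.swap 0 p i.succ))) := by
    intro σ
    have hβ : (fun i : Fin 1 => v ((Equiv.Perm.decomposeFin.symm (p, σ)) (Fin.castAdd 2 i)))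
        = (fun _ => v p) := by
      funext i
      rw [Subsingleton.elim i 0]
      show v ((Equiv.Perm.decomposeFin.symm (p, σ)) 0) = v p
      rw [Equiv.Perm.decomposeFin_symm_apply_zero]
    have hδ : (fun i : Fin 2 => v ((Equiv.Perm.decomposeFin.symm (p, σ)) (Fin.natAdd 1 i)))
        = (fun j : Fin 2 => v (Equiv.swap 0 p j.succ)) ∘ σ := by
      funext i
      have h1 : Fin.natAdd 1 i = i.succ := by
        ext; simp [Nat.add_comm]
      rw [h1, Equiv.Perm.decomposeFin_symm_apply_succ]
      rfl
    rw [hβ, hδ, AlternatingMap.map_perm, Equiv.Perm.decomposeFin.symm_sign]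
    rw [Units.smul_def, Units.smul_def, Units.val_mul]
    rw [mul_smul_comm, smul_smul]
    have : ((if p = 0 then (1:ℤˣ) else -1) : ℤˣ) • (β (fun _ => v p) * δ (fun i => v (Equiv.swap 0 p i.succ)))
        = (if p = 0 then (1:ℤ) else -1) • (β (fun _ => v p) * δ (fun i => v (Equiv.swap 0 p i.succ))) := by
      rw [Units.smul_def]
      congr 1
      split <;> simp
    rw [← this, Units.smul_def]
    congr 1
    rcases Int.units_eq_one_or (Equiv.Perm.sign σ) with hs | hs <;> rw [hs] <;> split <;> norm_num
  simp_rw [step]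
  rw [Finset.sum_const, Finset.card_univ]
  rw [show Fintype.card (Equiv.Perm (Fin 2)) = 2 by rw [Fintype.card_perm, Fintype.card_fin]; rfl]

lemma wedge_comm31 (δ : QForm 3) (β : QForm 1)
    (hc : ∀ u w, δ u * β w = β w * δ u) (v : Fin 4 → ℍ[ℝ]) :
    wedge δ β v = - wedge β δ v := by
  apply nsmul_cancel (n := 6) (by norm_num)
  have h1 := wedge_apply δ β v
  have h2 := wedge_apply β δ v
  rw [show Nat.factorial 3 * Nat.factorial 1 = 6 from rfl] at h1
  rw [show Nat.factorial 1 * Nat.factorial 3 = 6 from rfl] at h2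
  rw [h1, smul_neg, h2, ← Equiv.sum_comp (Equiv.mulRight ((finRotate 4)⁻¹))
    (fun τ : Equiv.Perm (Fin 4) => Equiv.Perm.sign τ •
      ((β fun i => v (τ (Fin.castAdd 3 i))) * δ fun i => v (τ (Fin.natAdd 1 i)))),
    ← Finset.sum_neg_distrib]
  refine Finset.sum_congr rfl fun τ _ => ?_
  have ha : (fun i : Fin 1 => v ((Equiv.mulRight ((finRotate 4)⁻¹) τ) (Fin.castAdd 3 i)))
      = (fun i : Fin 1 => v (τ (Fin.natAdd 3 i))) := by
    funext i
    rw [Subsingleton.elim i 0]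
    show v (τ ((finRotate 4)⁻¹ (Fin.castAdd 3 (0 : Fin 1)))) = v (τ (Fin.natAdd 3 (0 : Fin 1)))
    norm_num [show ((finRotate 4)⁻¹ : Equiv.Perm (Fin 4)) (Fin.castAdd 3 (0:Fin 1)) = Fin.natAdd 3 (0:Fin 1) by decide]
  have hb : (fun i : Fin 3 => v ((Equiv.mulRight ((finRotate 4)⁻¹) τ) (Fin.natAdd 1 i)))
      = (fun i : Fin 3 => v (τ (Fin.castAdd 1 i))) := by
    funext i
    show v (τ ((finRotate 4)⁻¹ (Fin.natAdd 1 i))) = v (τ (Fin.castAdd 1 i))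
    congr 1
    congr 1
    fin_cases i <;> decide
  have hsg : Equiv.Perm.sign (Equiv.mulRight ((finRotate 4)⁻¹) τ) = - Equiv.Perm.sign τ := by
    show Equiv.Perm.sign (τ * (finRotate 4)⁻¹) = - Equiv.Perm.sign τ
    rw [Equiv.Perm.sign_mul, show Equiv.Perm.sign ((finRotate 4)⁻¹ : Equiv.Perm (Fin 4)) = -1 by decide]
    simp
  rw [ha, hb, hsg]
  rw [Units.smul_def, Units.smul_def, Units.val_neg, neg_smul, neg_neg]
  rw [hc]

lemma wedge_comm21 (δ : QForm 2) (β : QForm 1)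
    (hc : ∀ u w, δ u * β w = β w * δ u) (v : Fin 3 → ℍ[ℝ]) :
    wedge δ β v = wedge β δ v := by
  apply nsmul_cancel (n := 2) (by norm_num)
  have h1 := wedge_apply δ β v
  have h2 := wedge_apply β δ v
  rw [show Nat.factorial 2 * Nat.factorial 1 = 2 from rfl] at h1
  rw [show Nat.factorial 1 * Nat.factorial 2 = 2 from rfl] at h2
  rw [h1, h2, ← Equiv.sum_comp (Equiv.mulRight ((finRotate 3)⁻¹))
    (fun τ : Equiv.Perm (Fin 3) => Equiv.Perm.sign τ •
      ((β fun i => v (τ (Fin.castAdd 2 i))) * δ fun i => v (τ (Fin.natAdd 1 i))))]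
  refine Finset.sum_congr rfl fun τ _ => ?_
  have ha : (fun i : Fin 1 => v ((Equiv.mulRight ((finRotate 3)⁻¹) τ) (Fin.castAdd 2 i)))
      = (fun i : Fin 1 => v (τ (Fin.natAdd 2 i))) := by
    funext i
    rw [Subsingleton.elim i 0]
    show v (τ ((finRotate 3)⁻¹ (Fin.castAdd 2 (0 : Fin 1)))) = v (τ (Fin.natAdd 2 (0 : Fin 1)))
    norm_num [show ((finRotate 3)⁻¹ : Equiv.Perm (Fin 3)) (Fin.castAdd 2 (0:Fin 1)) = Fin.natAdd 2 (0:Fin 1) by decide]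
  have hb : (fun i : Fin 2 => v ((Equiv.mulRight ((finRotate 3)⁻¹) τ) (Fin.natAdd 1 i)))
      = (fun i : Fin 2 => v (τ (Fin.castAdd 1 i))) := by
    funext i
    show v (τ ((finRotate 3)⁻¹ (Fin.natAdd 1 i))) = v (τ (Fin.castAdd 1 i))
    congr 1
    congr 1
    fin_cases i <;> decide
  have hsg : Equiv.Perm.sign (Equiv.mulRight ((finRotate 3)⁻¹) τ) = Equiv.Perm.sign τ := by
    show Equiv.Perm.sign (τ * (finRotate 3)⁻¹) = Equiv.Perm.sign τ
    rw [Equiv.Perm.sign_mul, show Equiv.Perm.sign ((finRotate 3)⁻¹ : Equiv.Perm (Fin 3)) = 1 by decide]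
    simp
  rw [ha, hb, hsg, hc]


lemma dx_apply (a : Fin 4) (u : Fin 1 → ℍ[ℝ]) :
    dx a u = algebraMap ℝ ℍ[ℝ] (coord a (u 0)) := rfl

lemma dform_apply (f : ℍ[ℝ] → ℍ[ℝ]) (x : ℍ[ℝ]) (u : Fin 1 → ℍ[ℝ]) :
    dform f x u = fderiv ℝ f x (u 0) := rfl

lemma qsmul_apply (q : ℍ[ℝ]) {m : ℕ} (γ : QForm m) (v : Fin m → ℍ[ℝ]) :
    qsmul q γ v = q * γ v := rfl

/-- explicit real value of `w3`. -/
def w3r (i j k : Fin 4) (v : Fin 3 → ℍ[ℝ]) : ℝ :=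
  coord k (v 0) * (coord i (v 1) * coord j (v 2) - coord i (v 2) * coord j (v 1))
  - coord k (v 1) * (coord i (v 0) * coord j (v 2) - coord i (v 2) * coord j (v 0))
  + coord k (v 2) * (coord i (v 0) * coord j (v 1) - coord i (v 1) * coord j (v 0))

lemma w3_apply (i j k : Fin 4) (v : Fin 3 → ℍ[ℝ]) :
    w3 i j k v = algebraMap ℝ ℍ[ℝ] (w3r i j k v) := by
  have hcomm : ∀ (u : Fin 2 → ℍ[ℝ]) (w : Fin 1 → ℍ[ℝ]),
      (wedge (dx i) (dx j)) u * (dx k) w = (dx k) w * (wedge (dx i) (dx j)) u := by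
    intro u w
    rw [w2_apply, dx_apply]
    exact Algebra.commutes _ _
  show wedge (wedge (dx i) (dx j)) (dx k) v = _
  rw [wedge_comm21 _ _ hcomm, wedge12_apply, Fin.sum_univ_three]
  simp only [w2_apply, dx_apply]
  have s01 : Equiv.swap (0:Fin 3) 0 ((0:Fin 2).succ) = 1 := by decide
  have s02 : Equiv.swap (0:Fin 3) 0 ((1:Fin 2).succ) = 2 := by decide
  have s11 : Equiv.swap (0:Fin 3) 1 ((0:Fin 2).succ) = 0 := by decide
  have s12 : Equiv.swap (0:Fin 3) 1 ((1:Fin 2).succ) = 2 := by decide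
  have s21 : Equiv.swap (0:Fin 3) 2 ((0:Fin 2).succ) = 1 := by decide
  have s22 : Equiv.swap (0:Fin 3) 2 ((1:Fin 2).succ) = 0 := by decide
  simp only [s01, s02, s11, s12, s21, s22,
    show (1:Fin 3) ≠ 0 by decide, show (2:Fin 3) ≠ 0 by decide,
    if_true, if_false, eq_self_iff_true, one_smul, neg_smul, neg_one_smul]
  norm_num
  simp only [w3r]
  norm_cast
  ring

lemma coord_e (i j : Fin 4) : coord i (e j) = if i = j then 1 else 0 := by
  fin_cases i <;> fin_cases j <;>
    simp [coord, e, QuaternionAlgebra.equivTuple] <;> rfl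

lemma D1q_apply (v : Fin 3 → ℍ[ℝ]) :
    D1q v = algebraMap ℝ ℍ[ℝ]
      (w3r 1 2 3 v - w3r 0 1 2 v + w3r 0 1 3 v - w3r 0 2 3 v) := by
  have : D1q v = w3 1 2 3 v +
      (((-1 : ℝ) ^ (2 + 3)) • w3 0 1 2 v +
       ((-1 : ℝ) ^ (2 + 4)) • w3 0 1 3 v +
       ((-1 : ℝ) ^ (3 + 4)) • w3 0 2 3 v) := rfl
  rw [this, w3_apply, w3_apply, w3_apply, w3_apply]
  norm_num [neg_one_smul, one_smul]
  norm_cast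
  ring

lemma basis_eq_e (i : Fin 4) : QuaternionAlgebra.basisOneIJK (-1:ℝ) (0:ℝ) (-1:ℝ) i = e i := by
  fin_cases i <;>
    simp [QuaternionAlgebra.basisOneIJK, Module.Basis.coe_ofEquivFun, e,
      QuaternionAlgebra.equivTuple] <;>
    ext <;> simp <;> rfl

lemma ext4 {X Y : QForm 4} (h : X (fun i => e i) = Y (fun i => e i)) : X = Y := by
  refine Module.Basis.ext_alternating (QuaternionAlgebra.basisOneIJK (-1:ℝ) (0:ℝ) (-1:ℝ)) fun v hv => ?_
  have hbij : Function.Bijective v := Finite.injective_iff_bijective.mp hv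
  have hcomp : ∀ (Z : QForm 4),
      (Z fun i => QuaternionAlgebra.basisOneIJK (-1:ℝ) (0:ℝ) (-1:ℝ) (v i)) =
        Equiv.Perm.sign (Equiv.ofBijective v hbij) • Z (fun i => e i) := by
    intro Z
    have harg : (fun i => QuaternionAlgebra.basisOneIJK (-1:ℝ) (0:ℝ) (-1:ℝ) (v i))
        = (fun i => e i) ∘ (Equiv.ofBijective v hbij) := by
      funext i
      rw [basis_eq_e]
      rfl
    rw [harg, AlternatingMap.map_perm]
  calc (X fun i => (QuaternionAlgebra.basisOneIJK (-1:ℝ) (0:ℝ) (-1:ℝ)) (v i))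
      = Equiv.Perm.sign (Equiv.ofBijective v hbij) • X (fun i => e i) := hcomp X
    _ = Equiv.Perm.sign (Equiv.ofBijective v hbij) • Y (fun i => e i) := by rw [h]
    _ = (Y fun i => (QuaternionAlgebra.basisOneIJK (-1:ℝ) (0:ℝ) (-1:ℝ)) (v i)) := (hcomp Y).symm

lemma vol_basis : vol (fun l => e l) = 1 := by
  have hcomm : ∀ (u : Fin 3 → ℍ[ℝ]) (w : Fin 1 → ℍ[ℝ]),
      (w3 0 1 2) u * (dx 3) w = (dx 3) w * (w3 0 1 2) u := by
    intro u w
    rw [w3_apply, dx_apply]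
    exact Algebra.commutes _ _
  have h : vol (fun l => e l) = wedge (w3 0 1 2) (dx 3) (fun l => e l) := rfl
  rw [h, wedge_comm31 _ _ hcomm, wedge13_apply, Fin.sum_univ_four]
  have t00 : Equiv.swap (0:Fin 4) 0 ((0:Fin 3).succ) = 1 := by decide
  have t01 : Equiv.swap (0:Fin 4) 0 ((1:Fin 3).succ) = 2 := by decide
  have t02 : Equiv.swap (0:Fin 4) 0 ((2:Fin 3).succ) = 3 := by decide
  have t10 : Equiv.swap (0:Fin 4) 1 ((0:Fin 3).succ) = 0 := by decide
  have t11 : Equiv.swap (0:Fin 4) 1 ((1:Fin 3).succ) = 2 := by decide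
  have t12 : Equiv.swap (0:Fin 4) 1 ((2:Fin 3).succ) = 3 := by decide
  have t20 : Equiv.swap (0:Fin 4) 2 ((0:Fin 3).succ) = 1 := by decide
  have t21 : Equiv.swap (0:Fin 4) 2 ((1:Fin 3).succ) = 0 := by decide
  have t22 : Equiv.swap (0:Fin 4) 2 ((2:Fin 3).succ) = 3 := by decide
  have t30 : Equiv.swap (0:Fin 4) 3 ((0:Fin 3).succ) = 1 := by decide
  have t31 : Equiv.swap (0:Fin 4) 3 ((1:Fin 3).succ) = 2 := by decide
  have t32 : Equiv.swap (0:Fin 4) 3 ((2:Fin 3).succ) = 0 := by decide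
  simp only [t00, t01, t02, t10, t11, t12, t20, t21, t22, t30, t31, t32,
    dx_apply, w3_apply, w3r, coord_e]
  norm_num [Fin.ext_iff, show (((3:Fin 4)):ℕ) = 3 from rfl, show (((2:Fin 4)):ℕ) = 2 from rfl, show (((1:Fin 4)):ℕ) = 1 from rfl, show (((0:Fin 4)):ℕ) = 0 from rfl]


/-- `D₁q ∧ df(x) = −df(x) ∧ D₁q
= −[∂f/∂x₁ + ∂f/∂x₂ + ∂f/∂x₃ + ∂f/∂x₄](x)·v`. -/
theorem D1q_wedge_df (U : Set ℍ[ℝ]) (hU : IsOpen U) (f : ℍ[ℝ] → ℍ[ℝ])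
    (hf : ContDiffOn ℝ 1 f U) (x : ℍ[ℝ]) (hx : x ∈ U) :
    wedge D1q (dform f x) = -wedge (dform f x) D1q ∧
    wedge D1q (dform f x) =
      qsmul (-(fderiv ℝ f x (e 0) + fderiv ℝ f x (e 1) +
               fderiv ℝ f x (e 2) + fderiv ℝ f x (e 3))) vol := by
  have hcommD : ∀ (u : Fin 3 → ℍ[ℝ]) (w : Fin 1 → ℍ[ℝ]),
      D1q u * (dform f x) w = (dform f x) w * D1q u := by
    intro u w; rw [D1q_apply]; exact Algebra.commutes _ _
  constructor
  · refine AlternatingMap.ext fun v => ?_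
    rw [AlternatingMap.neg_apply]
    exact wedge_comm31 D1q (dform f x) hcommD v
  · apply ext4
    rw [wedge_comm31 D1q (dform f x) hcommD, wedge13_apply, Fin.sum_univ_four,
      qsmul_apply, vol_basis, mul_one]
    have t00 : Equiv.swap (0:Fin 4) 0 ((0:Fin 3).succ) = 1 := by decide
    have t01 : Equiv.swap (0:Fin 4) 0 ((1:Fin 3).succ) = 2 := by decide
    have t02 : Equiv.swap (0:Fin 4) 0 ((2:Fin 3).succ) = 3 := by decide
    have t10 : Equiv.swap (0:Fin 4) 1 ((0:Fin 3).succ) = 0 := by decide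
    have t11 : Equiv.swap (0:Fin 4) 1 ((1:Fin 3).succ) = 2 := by decide
    have t12 : Equiv.swap (0:Fin 4) 1 ((2:Fin 3).succ) = 3 := by decide
    have t20 : Equiv.swap (0:Fin 4) 2 ((0:Fin 3).succ) = 1 := by decide
    have t21 : Equiv.swap (0:Fin 4) 2 ((1:Fin 3).succ) = 0 := by decide
    have t22 : Equiv.swap (0:Fin 4) 2 ((2:Fin 3).succ) = 3 := by decide
    have t30 : Equiv.swap (0:Fin 4) 3 ((0:Fin 3).succ) = 1 := by decide
    have t31 : Equiv.swap (0:Fin 4) 3 ((1:Fin 3).succ) = 2 := by decide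
    have t32 : Equiv.swap (0:Fin 4) 3 ((2:Fin 3).succ) = 0 := by decide
    simp only [t00, t01, t02, t10, t11, t12, t20, t21, t22, t30, t31, t32,
      dform_apply, D1q_apply, w3r, coord_e, ContinuousLinearMap.coe_coe]
    norm_num [Fin.ext_iff, show (((3:Fin 4)):ℕ) = 3 from rfl,
      show (((2:Fin 4)):ℕ) = 2 from rfl, show (((1:Fin 4)):ℕ) = 1 from rfl,
      show (((0:Fin 4)):ℕ) = 0 from rfl]
end
end
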